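/- Suppose D = ⋃_{i=1}^k D_i, where each D_i ⊆ ℝᵐ is nonempty, closed and convex. Let y* ∈ ℝᵐ and suppose the active index set I(y*) := {i : d(y*, D) = d(y*, D_i)} is a singleton {i₀}. Then there exists ε > 0 such that d(y, D) = d(y, D_{i₀}) for all y ∈ B(y*, ε); consequently, the function y ↦ ½ d(y, D)² is continuously differentiable on B(y*, ε) with gradient y ↦ y − P_{D_{i₀}}(y), and this gradient is Lipschitz continuous on B(y*, ε). In particular, y ↦ ½ d(y, D)² is continuously differentiable at y* with locally Lipschitz gradient. -/
import Mathlib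


open Filter Topology Metric
open scoped RealInnerProductSpace

noncomputable section

/-- The set of projections of `y` onto `S`. -/
def projSet {E : Type*} [NormedAddCommGroup E] (S : Set E) (y : E) : Set E :=
  {z | z ∈ S ∧ dist y z = Metric.infDist y S}

/-- The horizon cone of `S`. -/
def horizonCone {E : Type*} [NormedAddCommGroup E] [NormedSpace ℝ E] (S : Set E) : Set E :=
  {x | ∃ (u : ℕ → E) (β : ℕ → ℝ), (∀ t, u t ∈ S) ∧ (∀ t, 0 < β t) ∧
    Tendsto β atTop (𝓝 (0 : ℝ)) ∧ Tendsto (fun t => β t • u t) atTop (𝓝 x)}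

/-- The regular (Fréchet) normal cone to `S` at `x`. -/
def regNormalCone {E : Type*} [NormedAddCommGroup E] [InnerProductSpace ℝ E]
    (S : Set E) (x : E) : Set E :=
  {v | x ∈ S ∧ ∀ ε > 0, ∃ δ > 0, ∀ u ∈ S, ‖u - x‖ < δ → ⟪v, u - x⟫ ≤ ε * ‖u - x‖}

/-- The limiting normal cone to `S` at `x`. -/
def normalCone {E : Type*} [NormedAddCommGroup E] [InnerProductSpace ℝ E]
    (S : Set E) (x : E) : Set E :=
  {v | x ∈ S ∧ ∃ (xs vs : ℕ → E), (∀ t, vs t ∈ regNormalCone S (xs t)) ∧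
    Tendsto xs atTop (𝓝 x) ∧ Tendsto vs atTop (𝓝 v)}

/-- The regular (Fréchet) subdifferential at `x` of the function `φ + δ_C`
(the real-valued function `φ` plus the indicator of `C`). -/
def regSubdiff {E : Type*} [NormedAddCommGroup E] [InnerProductSpace ℝ E]
    (φ : E → ℝ) (C : Set E) (x : E) : Set E :=
  {v | x ∈ C ∧ ∀ ε > 0, ∃ δ > 0, ∀ u ∈ C, ‖u - x‖ < δ →
      φ u - φ x - ⟪v, u - x⟫ ≥ -(ε * ‖u - x‖)}

/-- The limiting subdifferential at `x` of the function `φ + δ_C`. -/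
def limSubdiff {E : Type*} [NormedAddCommGroup E] [InnerProductSpace ℝ E]
    (φ : E → ℝ) (C : Set E) (x : E) : Set E :=
  {v | x ∈ C ∧ ∃ (xs vs : ℕ → E), (∀ t, vs t ∈ regSubdiff φ C (xs t)) ∧
    Tendsto xs atTop (𝓝 x) ∧ Tendsto (fun t => φ (xs t)) atTop (𝓝 (φ x)) ∧
    Tendsto vs atTop (𝓝 v)}

/-- The smooth part `x ↦ ½ d(Ax, D)²` of the split-feasibility objective
`F = ½ d(A·, D)² + δ_C`. -/
def phiF {n m : ℕ} (A : EuclideanSpace ℝ (Fin n) →L[ℝ] EuclideanSpace ℝ (Fin m))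
    (D : Set (EuclideanSpace ℝ (Fin m))) (x : EuclideanSpace ℝ (Fin n)) : ℝ :=
  Metric.infDist (A x) D ^ 2 / 2

/-- A polyhedral set: an intersection of finitely many closed half-spaces. -/
def IsPolyhedral {E : Type*} [NormedAddCommGroup E] [InnerProductSpace ℝ E] (S : Set E) : Prop :=
  ∃ (k : ℕ) (a : Fin k → E) (b : Fin k → ℝ), S = {x | ∀ i, ⟪a i, x⟫ ≤ b i}

end

section AuxStmt12

noncomputable section

variable {E : Type*} [NormedAddCommGroup E] [InnerProductSpace ℝ E] [CompleteSpace E]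

lemma my_proj (C : Set E) (hC : C.Nonempty) (hcl : IsClosed C) (hconv : Convex ℝ C) :
    ∃ P : E → E, (∀ y, P y ∈ C ∧ dist y (P y) = Metric.infDist y C) ∧
      (∀ y, ∀ z ∈ C, ⟪y - P y, z - P y⟫ ≤ 0) := by
  have h : ∀ y : E, ∃ v ∈ C, ‖y - v‖ = ⨅ w : C, ‖y - w‖ := fun y =>
    exists_norm_eq_iInf_of_complete_convex hC (hcl.isComplete) hconv y
  choose P hPmem hPdist using h
  refine ⟨P, fun y => ⟨hPmem y, ?_⟩, fun y z hz => ?_⟩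
  · rw [Metric.infDist_eq_iInf, dist_eq_norm, hPdist y]
    simp_rw [dist_eq_norm]
  · exact (norm_eq_iInf_iff_real_inner_le_zero hconv (hPmem y)).1 (hPdist y) z hz

lemma my_nonexp {C : Set E} {P : E → E} (hmem : ∀ y, P y ∈ C)
    (hvar : ∀ y, ∀ z ∈ C, ⟪y - P y, z - P y⟫ ≤ 0) (y u : E) :
    ‖P y - P u‖ ≤ ‖y - u‖ := by
  have h1 := hvar y (P u) (hmem u)
  have h2 := hvar u (P y) (hmem y)
  have key : ‖P y - P u‖ ^ 2 ≤ ⟪y - u, P y - P u⟫ := by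
    have e : ⟪y - u, P y - P u⟫ - ‖P y - P u‖ ^ 2
        = -⟪y - P y, P u - P y⟫ - ⟪u - P u, P y - P u⟫ := by
      rw [← real_inner_self_eq_norm_sq]
      simp only [inner_sub_left, inner_sub_right]
      ring
    nlinarith
  have h3 : ⟪y - u, P y - P u⟫ ≤ ‖y - u‖ * ‖P y - P u‖ := real_inner_le_norm _ _
  nlinarith [norm_nonneg (P y - P u), norm_nonneg (y - u)]

lemma my_grad {C : Set E} {P : E → E}
    (hP : ∀ y, P y ∈ C ∧ dist y (P y) = Metric.infDist y C)
    (hvar : ∀ y, ∀ z ∈ C, ⟪y - P y, z - P y⟫ ≤ 0) (y : E) :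
    HasGradientAt (fun z => Metric.infDist z C ^ 2 / 2) (y - P y) y := by
  have hmem : ∀ u, P u ∈ C := fun u => (hP u).1
  have hd : ∀ u, Metric.infDist u C = ‖u - P u‖ := fun u => by
    rw [← (hP u).2, dist_eq_norm]
  have hkey : ∀ u : E, ‖Metric.infDist u C ^ 2 / 2 - Metric.infDist y C ^ 2 / 2
      - ⟪y - P y, u - y⟫‖ ≤ ‖u - y‖ ^ 2 := by
    intro u
    have hne : ‖P y - P u‖ ≤ ‖y - u‖ := my_nonexp hmem hvar y u
    have hup : ‖u - P u‖ ^ 2 ≤ ‖u - P y‖ ^ 2 := by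
      have h1 : Metric.infDist u C ≤ ‖u - P y‖ := by
        rw [← dist_eq_norm]; exact Metric.infDist_le_dist_of_mem (hmem y)
      rw [hd u] at h1
      nlinarith [norm_nonneg (u - P u), norm_nonneg (u - P y)]
    have hlo : ‖y - P y‖ ^ 2 ≤ ‖y - P u‖ ^ 2 := by
      have h1 : Metric.infDist y C ≤ ‖y - P u‖ := by
        rw [← dist_eq_norm]; exact Metric.infDist_le_dist_of_mem (hmem u)
      rw [hd y] at h1
      nlinarith [norm_nonneg (y - P y), norm_nonneg (y - P u)]
    have e1 : ‖u - P y‖ ^ 2 = ‖y - P y‖ ^ 2 + 2 * ⟪y - P y, u - y⟫ + ‖u - y‖ ^ 2 := by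
      have : u - P y = (y - P y) + (u - y) := by abel
      rw [this, norm_add_sq_real]
    have e2 : ‖y - P u‖ ^ 2 = ‖u - P u‖ ^ 2 + 2 * ⟪u - P u, y - u⟫ + ‖y - u‖ ^ 2 := by
      have : y - P u = (u - P u) + (y - u) := by abel
      rw [this, norm_add_sq_real]
    have e3 : ⟪u - P u, u - y⟫ - ⟪y - P y, u - y⟫
        = ‖u - y‖ ^ 2 + ⟪P y - P u, u - y⟫ := by
      rw [← real_inner_self_eq_norm_sq]
      simp only [inner_sub_left, inner_sub_right]
      ring
    have e4 : ⟪P y - P u, u - y⟫ ≥ -(‖y - u‖ * ‖u - y‖) := by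
      have := real_inner_le_norm (P u - P y) (u - y)
      have hn : ⟪P u - P y, u - y⟫ = -⟪P y - P u, u - y⟫ := by
        simp only [inner_sub_left]; ring
      have hn2 : ‖P u - P y‖ = ‖P y - P u‖ := norm_sub_rev _ _
      nlinarith [norm_nonneg (u - y)]
    have e5 : ⟪u - P u, y - u⟫ = -⟪u - P u, u - y⟫ := by
      simp only [inner_sub_right]; ring
    have hnr : ‖y - u‖ = ‖u - y‖ := norm_sub_rev _ _
    rw [← hd u, ← hd y] at *
    rw [Real.norm_eq_abs, abs_le]
    constructor <;> nlinarith [norm_nonneg (u - y)]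
  rw [hasGradientAt_iff_isLittleO]
  have hbig : (fun u : E => Metric.infDist u C ^ 2 / 2 - Metric.infDist y C ^ 2 / 2
      - ⟪y - P y, u - y⟫) =O[𝓝 y] fun u => ‖u - y‖ ^ 2 :=
    Asymptotics.isBigO_of_le' (c := 1) _ fun u => by
      simpa using (hkey u).trans (le_abs_self _)
  refine hbig.trans_isLittleO ?_
  rw [Asymptotics.isLittleO_iff]
  intro c hc
  have ht : Tendsto (fun u : E => ‖u - y‖) (𝓝 y) (𝓝 0) := by
    have h0 : Tendsto (fun u : E => u - y) (𝓝 y) (𝓝 (y - y)) :=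
      (continuous_id.sub continuous_const).tendsto y
    rw [sub_self] at h0
    simpa using h0.norm
  filter_upwards [ht.eventually_le_const (by linarith : (0:ℝ) < c)] with u hu
  simp only [Real.norm_eq_abs, norm_norm]
  rw [abs_of_nonneg (by positivity), pow_two]
  exact mul_le_mul_of_nonneg_right hu (norm_nonneg _)

end

end AuxStmt12

/-- If `D = ⋃ᵢ Dᵢ` with each `Dᵢ` nonempty closed convex, and the active
index set at `y*` is the singleton `{i₀}`, then near `y*` one has `d(·, D) = d(·, D_{i₀})`;
consequently `½ d(·, D)²` is continuously differentiable there with gradient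
`y ↦ y − P_{D_{i₀}}(y)`, which is Lipschitz on the ball. -/
theorem stmt_12 (m k : ℕ) (Di : Fin k → Set (EuclideanSpace ℝ (Fin m)))
    (hne : ∀ i, (Di i).Nonempty) (hcl : ∀ i, IsClosed (Di i)) (hconv : ∀ i, Convex ℝ (Di i))
    (ystar : EuclideanSpace ℝ (Fin m)) (i₀ : Fin k)
    (hact : {i | Metric.infDist ystar (⋃ j, Di j) = Metric.infDist ystar (Di i)} = {i₀}) :
    ∃ ε > (0 : ℝ), ∃ P : EuclideanSpace ℝ (Fin m) → EuclideanSpace ℝ (Fin m),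
      (∀ y, P y ∈ Di i₀ ∧ dist y (P y) = Metric.infDist y (Di i₀)) ∧
      (∀ y ∈ Metric.closedBall ystar ε,
        Metric.infDist y (⋃ j, Di j) = Metric.infDist y (Di i₀)) ∧
      (∀ y ∈ Metric.closedBall ystar ε,
        HasGradientAt (fun z => Metric.infDist z (⋃ j, Di j) ^ 2 / 2) (y - P y) y) ∧
      ContinuousOn (fun y => y - P y) (Metric.closedBall ystar ε) ∧
      ∃ K : NNReal, LipschitzOnWith K (fun y => y - P y) (Metric.closedBall ystar ε) := by
  classical
  set D := ⋃ j, Di j with hDdef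
  have hDne : D.Nonempty := ⟨(hne i₀).choose, Set.mem_iUnion.2 ⟨i₀, (hne i₀).choose_spec⟩⟩
  obtain ⟨P, hPprop, hvar⟩ := my_proj (Di i₀) (hne i₀) (hcl i₀) (hconv i₀)
  have hmem : ∀ y, P y ∈ Di i₀ := fun y => (hPprop y).1
  have hi₀eq : Metric.infDist ystar D = Metric.infDist ystar (Di i₀) := by
    have : i₀ ∈ {i | Metric.infDist ystar D = Metric.infDist ystar (Di i)} := by
      rw [hact]; rfl
    exact this
  have hstrict : ∀ i, i ≠ i₀ → Metric.infDist ystar D < Metric.infDist ystar (Di i) := by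
    intro i hi
    have hle : Metric.infDist ystar D ≤ Metric.infDist ystar (Di i) :=
      Metric.infDist_le_infDist_of_subset (Set.subset_iUnion Di i) (hne i)
    rcases lt_or_eq_of_le hle with h | h
    · exact h
    · exact absurd (show i ∈ ({i₀} : Set (Fin k)) from hact ▸ h) hi
  set f : Fin k → ℝ := fun i =>
    if i = i₀ then 1 else (Metric.infDist ystar (Di i) - Metric.infDist ystar D) / 5 with hf
  have hfin : (Finset.univ : Finset (Fin k)).Nonempty := ⟨i₀, Finset.mem_univ _⟩
  set ε := Finset.univ.inf' hfin f with hεdef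
  have hfpos : ∀ i, 0 < f i := by
    intro i
    by_cases hi : i = i₀
    · simp [hf, hi]
    · simp only [hf, if_neg hi]
      linarith [hstrict i hi]
  have hε : 0 < ε := (Finset.lt_inf'_iff hfin).2 fun i _ => hfpos i
  have hεle : ∀ i, i ≠ i₀ →
      ε ≤ (Metric.infDist ystar (Di i) - Metric.infDist ystar D) / 5 := by
    intro i hi
    have h := Finset.inf'_le f (Finset.mem_univ i)
    simpa only [hf, if_neg hi] using h
  -- equality of distance functions on the larger ball
  have heq : ∀ y ∈ Metric.closedBall ystar (2 * ε),
      Metric.infDist y D = Metric.infDist y (Di i₀) := by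
    intro y hy
    have hdy : dist y ystar ≤ 2 * ε := Metric.mem_closedBall.1 hy
    have h0 : ∀ i, Metric.infDist y (Di i₀) ≤ Metric.infDist y (Di i) := by
      intro i
      by_cases hi : i = i₀
      · rw [hi]
      · have l1 : Metric.infDist y (Di i₀) ≤ Metric.infDist ystar (Di i₀) + dist y ystar :=
          Metric.infDist_le_infDist_add_dist
        have l2 : Metric.infDist ystar (Di i) ≤ Metric.infDist y (Di i) + dist ystar y :=
          Metric.infDist_le_infDist_add_dist
        rw [dist_comm ystar y] at l2
        have h5 := hεle i hi
        linarith [hstrict i hi]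
    refine le_antisymm
      (Metric.infDist_le_infDist_of_subset (Set.subset_iUnion Di i₀) (hne i₀)) ?_
    rw [Metric.infDist_eq_iInf (s := D)]
    haveI : Nonempty ↥D := hDne.to_subtype
    refine le_ciInf fun z => ?_
    obtain ⟨i, hzi⟩ := Set.mem_iUnion.1 z.2
    exact (h0 i).trans (Metric.infDist_le_dist_of_mem hzi)
  -- Lipschitz
  have hlip : LipschitzWith 2 (fun y => y - P y) := by
    refine LipschitzWith.of_dist_le_mul fun a b => ?_
    rw [dist_eq_norm, dist_eq_norm, NNReal.coe_ofNat]
    have h1 : (a - P a) - (b - P b) = (a - b) + (P b - P a) := by abel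
    have h2 : ‖P b - P a‖ ≤ ‖b - a‖ := my_nonexp hmem hvar b a
    calc ‖(a - P a) - (b - P b)‖ ≤ ‖a - b‖ + ‖P b - P a‖ := by
          rw [h1]; exact norm_add_le _ _
      _ ≤ ‖a - b‖ + ‖b - a‖ := by linarith
      _ = 2 * ‖a - b‖ := by rw [norm_sub_rev b a]; ring
  refine ⟨ε, hε, P, hPprop, ?_, ?_, hlip.continuous.continuousOn, 2, hlip.lipschitzOnWith⟩
  · intro y hy
    exact heq y (Metric.closedBall_subset_closedBall (by linarith) hy)
  · intro y hy
    have hg := my_grad hPprop hvar y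
    refine hg.congr_of_eventuallyEq ?_
    have hball : Metric.ball y ε ∈ 𝓝 y := Metric.ball_mem_nhds y hε
    filter_upwards [hball] with z hz
    have hz2 : z ∈ Metric.closedBall ystar (2 * ε) := by
      rw [Metric.mem_closedBall]
      have := Metric.mem_ball.1 hz
      have := Metric.mem_closedBall.1 hy
      calc dist z ystar ≤ dist z y + dist y ystar := dist_triangle _ _ _
        _ ≤ 2 * ε := by linarith
    rw [heq z hz2]
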